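/- Let G_1,…,G_N ∈ S = ℝ[x,y,z] be homogeneous forms with G_i ∈ ⟨x,y⟩ for all i and ⟨x,y⟩^k ⊆ J := ⟨G_1,…,G_N⟩ for some k ≥ 0. For each i, let c_i be the highest power of z occurring in G_i and let F_i ∈ ℝ[x,y] be the coefficient of z^{c_i} in G_i (so in_ω G_i = z^{c_i} F_i for ω = (0,0,1)); set I := ⟨F_1,…,F_N⟩. If in_ω J ⊆ I, then there exists an integer D such that dim_ℝ(S/J)_d = dim_ℝ(S/I)_d for all d ≥ D; that is, S/J and S/I have the same Hilbert polynomial. -/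

import Mathlib

/-!
Statement 11: let `G 1, …, G N` be homogeneous forms in `⟨x,y⟩` with
`⟨x,y⟩^k ⊆ J = ⟨G₁,…,G_N⟩`.  For each `i` let `c i` be the highest power of `z`
occurring in `G i` and `F i ∈ ℝ[x,y]` the coefficient of `z^(c i)` in `G i`, and set
`I = ⟨F₁,…,F_N⟩`.  If `in_ω J ⊆ I` (for the weight `ω = (0,0,1)`), then `S/J` and `S/I`
have the same Hilbert polynomial: their Hilbert functions agree in all large degrees.
-/

open MvPolynomial

noncomputable section

abbrev PS := MvPolynomial (Fin 3) ℝ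

/-- `dim_ℝ (S/J)_d`: the dimension of the degree-`d` graded piece of `S/J`. -/
def hdim (J : Ideal PS) (d : ℕ) : ℕ :=
  Module.finrank ℝ ↥(Submodule.map (Ideal.Quotient.mkₐ ℝ J).toLinearMap
    (homogeneousSubmodule (Fin 3) ℝ d))

/-- The coefficient of `z^c` in `G`, viewed as a polynomial in `z = X 2` with
coefficients in `ℝ[x,y]`. -/
def zCoeff (G : PS) (c : ℕ) : PS :=
  ∑ m ∈ G.support.filter (fun m => m 2 = c),
    monomial (m - Finsupp.single 2 c) (coeff m G)

/-- The highest power of `z = X 2` occurring in `F`. -/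
def zdeg (F : PS) : ℕ := F.support.sup fun m => m 2

/-- The initial form of `F` with respect to the weight `ω = (0,0,1)`: the sum of the
terms of `F` whose power of `z` is maximal. -/
def inW (F : PS) : PS :=
  ∑ m ∈ F.support.filter (fun m => m 2 = zdeg F), monomial m (coeff m F)

/-- The initial ideal `in_ω K` of an ideal `K` for the weight `ω = (0,0,1)`. -/
def inIdeal (K : Ideal PS) : Ideal PS :=
  Ideal.span {p : PS | ∃ F ∈ K, F ≠ 0 ∧ inW F = p}

/-! ### Auxiliary development -/

section Aux
open Finsupp

abbrev wz : Fin 3 → ℕ := fun i => if i = 2 then 1 else 0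


lemma weight_wz (m : Fin 3 →₀ ℕ) : (Finsupp.weight wz) m = m 2 := by
  rw [Finsupp.weight_apply, Finsupp.sum]
  have h : ∀ i ∈ m.support, m i • wz i = if i = 2 then m i else 0 := by
    intro i _; by_cases h : i = 2 <;> simp [wz, h]
  rw [Finset.sum_congr rfl h, Finset.sum_ite_eq' m.support 2 (fun i => m i)]
  split
  · rfl
  · next h => exact (Finsupp.notMem_support_iff.mp h).symm

lemma weight_one' (m : Fin 3 →₀ ℕ) : (Finsupp.weight (1 : Fin 3 → ℕ)) m = m.degree :=
  by rw [Finsupp.degree_eq_weight_one (R := ℕ)]; rfl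

lemma deg3 (m : Fin 3 →₀ ℕ) : m.degree = m 0 + m 1 + m 2 := by
  rw [Finsupp.degree_apply]
  rw [Finset.sum_subset (Finset.subset_univ m.support)
    (fun i _ hi => Finsupp.notMem_support_iff.mp hi)]
  simp [Fin.sum_univ_three]


lemma whC_monomial_mul (w : Fin 3 → ℕ) (e : ℕ) (m : Fin 3 →₀ ℕ) (p : PS) :
    weightedHomogeneousComponent w e (monomial m 1 * p) =
      if (Finsupp.weight w) m ≤ e then
        monomial m 1 * weightedHomogeneousComponent w (e - (Finsupp.weight w) m) p
      else 0 := by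
  classical
  ext μ
  rw [coeff_weightedHomogeneousComponent]
  by_cases hm : m ≤ μ
  · have hsum : (Finsupp.weight w) (μ - m) + (Finsupp.weight w) m = (Finsupp.weight w) μ := by
      rw [← map_add]; congr 1; exact tsub_add_cancel_of_le hm
    by_cases hwm : (Finsupp.weight w) m ≤ e
    · rw [if_pos hwm, coeff_monomial_mul', if_pos hm, coeff_monomial_mul', if_pos hm,
        coeff_weightedHomogeneousComponent, one_mul, one_mul]
      by_cases he : (Finsupp.weight w) μ = e
      · rw [if_pos he, if_pos (by omega)]
      · rw [if_neg he, if_neg (by omega)]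
    · rw [if_neg hwm, coeff_zero]
      by_cases he : (Finsupp.weight w) μ = e
      · omega
      · rw [if_neg he]
  · by_cases he : (Finsupp.weight w) μ = e
    · rw [if_pos he, coeff_monomial_mul', if_neg hm]
      split_ifs with h
      · rw [coeff_monomial_mul', if_neg hm]
      · rw [coeff_zero]
    · rw [if_neg he]
      split_ifs with h
      · rw [coeff_monomial_mul', if_neg hm]
      · rw [coeff_zero]


lemma zdeg_le_of_support {F : PS} {μ : Fin 3 →₀ ℕ} (h : μ ∈ F.support) : μ 2 ≤ zdeg F :=
  Finset.le_sup (f := fun m => m 2) h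

lemma inW_eq (F : PS) : inW F = weightedHomogeneousComponent wz (zdeg F) F := by
  rw [inW, weightedHomogeneousComponent_apply]
  apply Finset.sum_congr _ fun _ _ => rfl
  ext μ
  simp [weight_wz]

lemma isWH_inW (F : PS) : IsWeightedHomogeneous wz (inW F) (zdeg F) := by
  rw [inW_eq]; exact weightedHomogeneousComponent_isWeightedHomogeneous _ _

lemma L_inW (e : ℕ) (F : PS) :
    weightedHomogeneousComponent wz e (inW F) = if e = zdeg F then inW F else 0 :=
  weightedHomogeneousComponent_of_mem (isWH_inW F)

lemma zdeg_monomial (m : Fin 3 →₀ ℕ) (r : ℝ) (hr : r ≠ 0) : zdeg (monomial m r) = m 2 := by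
  rw [zdeg, support_monomial, if_neg hr, Finset.sup_singleton]

lemma inW_monomial (m : Fin 3 →₀ ℕ) (r : ℝ) (hr : r ≠ 0) : inW (monomial m r) = monomial m r := by
  rw [inW_eq, zdeg_monomial m r hr]
  exact IsWeightedHomogeneous.weightedHomogeneousComponent_same
    (isWeightedHomogeneous_monomial _ _ _ (weight_wz m))

lemma zdeg_eq_of_zCoeff_ne {G : PS} {c : ℕ} (hle : ∀ m ∈ G.support, m 2 ≤ c)
    (hne : zCoeff G c ≠ 0) : zdeg G = c ∧ G ≠ 0 := by
  have hex : ∃ m ∈ G.support, m 2 = c := by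
    by_contra h
    push_neg at h
    apply hne
    rw [zCoeff, Finset.sum_eq_zero]
    intro m hm
    rw [Finset.mem_filter] at hm
    exact absurd hm.2 (h m hm.1)
  obtain ⟨m, hm, hmc⟩ := hex
  constructor
  · exact le_antisymm (Finset.sup_le hle) (hmc ▸ zdeg_le_of_support hm)
  · intro h
    rw [h] at hm
    simp at hm

lemma monomial_z_mul_zCoeff {G : PS} {c : ℕ} (hzd : zdeg G = c) :
    monomial (Finsupp.single 2 c) (1:ℝ) * zCoeff G c = inW G := by
  rw [zCoeff, Finset.mul_sum, inW, hzd]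
  apply Finset.sum_congr rfl
  intro m hm
  rw [Finset.mem_filter] at hm
  rw [monomial_mul, one_mul]
  have hle : Finsupp.single 2 c ≤ m := Finsupp.single_le_iff.mpr (le_of_eq hm.2.symm)
  rw [add_tsub_cancel_of_le hle]

lemma degree_single3 (c : ℕ) : (Finsupp.single (2 : Fin 3) c).degree = c := by
  classical
  rw [Finsupp.degree_apply]
  by_cases hc : c = 0
  · simp [hc]
  · rw [Finsupp.support_single_ne_zero _ hc, Finset.sum_singleton, Finsupp.single_eq_same]

lemma zCoeff_isHomogeneous {G : PS} {n c : ℕ} (hG : G.IsHomogeneous n) :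
    (zCoeff G c).IsHomogeneous (n - c) := by
  rw [zCoeff]
  apply IsWeightedHomogeneous.sum
  intro m hm
  rw [Finset.mem_filter] at hm
  apply isHomogeneous_monomial
  have hdm : m.degree = n := by
    have := hG (MvPolynomial.mem_support_iff.mp hm.1)
    rwa [weight_one'] at this
  have hle : Finsupp.single 2 c ≤ m := Finsupp.single_le_iff.mpr (le_of_eq hm.2.symm)
  have h2 : (m - Finsupp.single 2 c) + Finsupp.single 2 c = m := tsub_add_cancel_of_le hle
  have h3 : (m - Finsupp.single 2 c).degree + (Finsupp.single (2:Fin 3) c).degree = m.degree := by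
    rw [Finsupp.degree_eq_weight_one, ← map_add, h2]
  rw [degree_single3] at h3
  omega

lemma zCoeff_z_zero {G : PS} {c : ℕ} {τ : Fin 3 →₀ ℕ} (h : τ ∈ (zCoeff G c).support) :
    τ 2 = 0 := by
  classical
  rw [zCoeff] at h
  have := MvPolynomial.support_sum h
  rw [Finset.mem_biUnion] at this
  obtain ⟨m, hm, hτ⟩ := this
  rw [Finset.mem_filter] at hm
  have := support_monomial_subset hτ
  rw [Finset.mem_singleton] at this
  subst this
  rw [Finsupp.tsub_apply, Finsupp.single_eq_same, hm.2]
  omega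


def Mset (s : Set PS) : Set PS := {q | ∃ m : Fin 3 →₀ ℕ, ∃ f ∈ s, q = monomial m 1 * f}

lemma real_smul_mem (K : Ideal PS) (r : ℝ) {y : PS} (hy : y ∈ K) : r • y ∈ K := by
  rw [smul_eq_C_mul]; exact K.mul_mem_left _ hy

lemma mul_mem_span_Mset (s : Set PS) (a : PS) {x : PS}
    (hx : x ∈ Submodule.span ℝ (Mset s)) : a * x ∈ Submodule.span ℝ (Mset s) := by
  induction hx using Submodule.span_induction with
  | mem q hq =>
    obtain ⟨m, f, hf, rfl⟩ := hq
    rw [as_sum a, Finset.sum_mul]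
    apply Submodule.sum_mem
    intro v hv
    have : (monomial v (coeff v a)) * (monomial m 1 * f)
        = (coeff v a) • (monomial (v + m) 1 * f) := by
      rw [smul_eq_C_mul, ← mul_assoc, ← mul_assoc, C_mul_monomial, monomial_mul]
    rw [this]
    exact Submodule.smul_mem _ _ (Submodule.subset_span ⟨v + m, f, hf, rfl⟩)
  | zero => rw [mul_zero]; exact Submodule.zero_mem _
  | add x y hx hy ihx ihy => rw [mul_add]; exact Submodule.add_mem _ ihx ihy
  | smul r x hx ih => rw [mul_smul_comm]; exact Submodule.smul_mem _ _ ih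

lemma mem_span_Mset {s : Set PS} {p : PS} (hp : p ∈ Ideal.span s) :
    p ∈ Submodule.span ℝ (Mset s) := by
  induction hp using Submodule.span_induction with
  | mem q hq =>
    exact Submodule.subset_span ⟨0, q, hq, by rw [monomial_zero', C_1, one_mul]⟩
  | zero => exact Submodule.zero_mem _
  | add x y hx hy ihx ihy => exact Submodule.add_mem _ ihx ihy
  | smul a x hx ih => rw [smul_eq_mul]; exact mul_mem_span_Mset s a ih

lemma map_ideal_le {s : Set PS} (K : Ideal PS) (T : PS →ₗ[ℝ] PS)
    (h : ∀ (m : Fin 3 →₀ ℕ) (f : PS), f ∈ s → T (monomial m 1 * f) ∈ K) :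
    ∀ p ∈ Ideal.span s, T p ∈ K := by
  intro p hp
  have hsp := mem_span_Mset hp
  clear hp
  induction hsp using Submodule.span_induction with
  | mem q hq => obtain ⟨m, f, hf, rfl⟩ := hq; exact h m f hf
  | zero => rw [map_zero]; exact K.zero_mem
  | add x y hx hy ihx ihy => rw [map_add]; exact K.add_mem ihx ihy
  | smul r x hx ih => rw [map_smul]; exact real_smul_mem K r ih

lemma isWH_of_whC (w w' : Fin 3 → ℕ) (n : ℕ) {p : PS} {c : ℕ}
    (hp : IsWeightedHomogeneous w p c) :
    IsWeightedHomogeneous w (weightedHomogeneousComponent w' n p) c := by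
  intro d hd
  by_cases h : (Finsupp.weight w') d = n
  · rw [coeff_weightedHomogeneousComponent, if_pos h] at hd; exact hp hd
  · rw [coeff_weightedHomogeneousComponent, if_neg h] at hd; exact (hd rfl).elim

lemma whC_comm (w w' : Fin 3 → ℕ) (e n : ℕ) (p : PS) :
    weightedHomogeneousComponent w e (weightedHomogeneousComponent w' n p)
      = weightedHomogeneousComponent w' n (weightedHomogeneousComponent w e p) := by
  ext μ
  simp only [coeff_weightedHomogeneousComponent]
  split_ifs <;> rfl

lemma homogeneousComponent_mem_span {s : Set PS} (hs : ∀ f ∈ s, ∃ n, f.IsHomogeneous n)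
    (d : ℕ) : ∀ p ∈ Ideal.span s, homogeneousComponent d p ∈ Ideal.span s := by
  apply map_ideal_le _ (homogeneousComponent d)
  intro m f hf
  obtain ⟨n, hn⟩ := hs f hf
  rw [show homogeneousComponent (σ := Fin 3) (R := ℝ) d
      = weightedHomogeneousComponent 1 d from rfl, whC_monomial_mul]
  split_ifs
  · rw [weightedHomogeneousComponent_of_mem (by rwa [mem_weightedHomogeneousSubmodule])]
    split_ifs
    · exact Ideal.mul_mem_left _ _ (Ideal.subset_span hf)
    · rw [mul_zero]; exact zero_mem _
  · exact zero_mem _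

lemma L_mem_inIdeal (K : Ideal PS) (e : ℕ) :
    ∀ p ∈ inIdeal K, weightedHomogeneousComponent wz e p ∈ inIdeal K := by
  apply map_ideal_le
  rintro m f ⟨F, hFK, hF0, rfl⟩
  rw [whC_monomial_mul]
  split_ifs with h
  · rw [L_inW]
    split_ifs
    · exact Ideal.mul_mem_left _ _ (Ideal.subset_span ⟨F, hFK, hF0, rfl⟩)
    · rw [mul_zero]; exact zero_mem _
  · exact zero_mem _

lemma big_xy_mem {J : Ideal PS} {k : ℕ} (hk : (Ideal.span {X 0, X 1} : Ideal PS) ^ k ≤ J)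
    (p : PS) (h : ∀ μ ∈ p.support, k ≤ μ 0 + μ 1) : p ∈ inIdeal J := by
  classical
  rw [as_sum p]
  apply Submodule.sum_mem
  intro μ hμ
  set a1 := min (μ 0) k with ha1
  set b1 := k - a1 with hb1
  set ρ : Fin 3 →₀ ℕ := Finsupp.single 0 a1 + Finsupp.single 1 b1 with hρ
  have hρ0 : ρ 0 = a1 := by simp [hρ]
  have hρ1 : ρ 1 = b1 := by simp [hρ]
  have hρ2 : ρ 2 = 0 := by simp [hρ]
  have hxy := h μ hμ
  have hρμ : ρ ≤ μ := by
    rw [Finsupp.le_def]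
    intro i
    fin_cases i <;> simp only [Fin.isValue, show ((⟨0, by omega⟩ : Fin 3) : Fin 3) = 0 from rfl] <;>
      first
      | (show ρ 0 ≤ μ 0; rw [hρ0]; omega)
      | (show ρ 1 ≤ μ 1; rw [hρ1]; omega)
      | (show ρ 2 ≤ μ 2; rw [hρ2]; omega)
  have hmemJ : (monomial ρ (1:ℝ)) ∈ J := by
    apply hk
    have h0 : (X 0 : PS) ∈ Ideal.span {X 0, X 1} :=
      Ideal.subset_span (Set.mem_insert _ _)
    have h1 : (X 1 : PS) ∈ Ideal.span {X 0, X 1} :=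
      Ideal.subset_span (Set.mem_insert_of_mem _ rfl)
    have := Ideal.mul_mem_mul (Ideal.pow_mem_pow h0 a1) (Ideal.pow_mem_pow h1 b1)
    rw [← pow_add] at this
    have hab : a1 + b1 = k := by omega
    rw [hab] at this
    have hmono : (monomial ρ (1:ℝ)) = X 0 ^ a1 * X 1 ^ b1 := by
      rw [X_pow_eq_monomial, X_pow_eq_monomial, monomial_mul, one_mul, hρ]
    rwa [hmono]
  have hgen : (monomial ρ (1:ℝ)) ∈ inIdeal J :=
    Ideal.subset_span ⟨monomial ρ 1, hmemJ, by
      rw [Ne, monomial_eq_zero]; exact one_ne_zero, inW_monomial _ _ one_ne_zero⟩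
  have heq : (monomial μ (coeff μ p) : PS) = monomial (μ - ρ) (coeff μ p) * monomial ρ 1 := by
    rw [monomial_mul, mul_one, tsub_add_cancel_of_le hρμ]
  rw [heq]
  exact Ideal.mul_mem_left _ _ hgen

lemma support_whC_subset (w : Fin 3 → ℕ) (n : ℕ) (p : PS) :
    (weightedHomogeneousComponent w n p).support ⊆ p.support := by
  intro μ hμ
  rw [MvPolynomial.mem_support_iff] at hμ ⊢
  intro h
  apply hμ
  rw [coeff_weightedHomogeneousComponent, h]
  split_ifs <;> rfl

lemma whC_wz_eq_zero_of_zdeg_lt {p : PS} {b e : ℕ} (hb : ∀ μ ∈ p.support, μ 2 ≤ b)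
    (he : b < e) : weightedHomogeneousComponent wz e p = 0 := by
  apply weightedHomogeneousComponent_eq_zero'
  intro μ hμ
  rw [weight_wz]
  have := hb μ hμ
  omega

lemma key_lift {J : Ideal PS} (hJhom : ∀ p ∈ J, ∀ d', homogeneousComponent d' p ∈ J)
    {u : PS} (hu : u ∈ inIdeal J) (d e : ℕ) :
    ∃ v, v ∈ J ∧ v.IsHomogeneous d ∧
      (∀ e', e < e' → weightedHomogeneousComponent wz e' v = 0) ∧
      weightedHomogeneousComponent wz e v
        = weightedHomogeneousComponent wz e (homogeneousComponent d u) := by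
  have hsp := mem_span_Mset hu
  clear hu
  induction hsp using Submodule.span_induction with
  | mem q hq =>
    obtain ⟨m, f, ⟨F, hFJ, hF0, rfl⟩, rfl⟩ := hq
    have hhc : homogeneousComponent (σ := Fin 3) (R := ℝ) = weightedHomogeneousComponent 1 :=
      rfl
    set c := zdeg F with hc
    set wzm := (Finsupp.weight wz) m with hwzm
    set w1m := (Finsupp.weight (1 : Fin 3 → ℕ)) m with hw1m
    have hQwh : ∀ d'', IsWeightedHomogeneous wz
        (weightedHomogeneousComponent 1 d'' (inW F)) c :=
      fun d'' => isWH_of_whC wz 1 d'' (isWH_inW F)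
    have hRHS : weightedHomogeneousComponent wz e
        (homogeneousComponent d (monomial m 1 * inW F))
        = if w1m ≤ d ∧ wzm ≤ e ∧ e - wzm = c then
            monomial m 1 * weightedHomogeneousComponent 1 (d - w1m) (inW F)
          else 0 := by
      rw [hhc, whC_monomial_mul]
      by_cases h1 : w1m ≤ d
      · rw [if_pos h1, whC_monomial_mul]
        by_cases h2 : wzm ≤ e
        · rw [if_pos h2,
            weightedHomogeneousComponent_of_mem
              (mem_weightedHomogeneousSubmodule _ _ _ _ |>.mpr (hQwh (d - w1m)))]
          by_cases h3 : e - wzm = c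
          · rw [if_pos h3, if_pos ⟨h1, h2, h3⟩]
          · rw [if_neg h3, if_neg (by tauto), mul_zero]
        · rw [if_neg h2, if_neg (by tauto)]
      · rw [if_neg h1, map_zero, if_neg (by tauto)]
    by_cases H : w1m ≤ d ∧ wzm ≤ e ∧ e - wzm = c
    · refine ⟨monomial m 1 * weightedHomogeneousComponent 1 (d - w1m) F,
        Ideal.mul_mem_left _ _ (by rw [← hhc]; exact hJhom F hFJ (d - w1m)), ?_, ?_, ?_⟩
      · have hmono : (monomial m (1:ℝ)).IsHomogeneous w1m :=
          isHomogeneous_monomial _ (by rw [hw1m, weight_one'])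
        have hcomp : (weightedHomogeneousComponent 1 (d - w1m) F).IsHomogeneous (d - w1m) := by
          rw [← hhc]; exact homogeneousComponent_isHomogeneous _ _
        have := hmono.mul hcomp
        rwa [Nat.add_sub_cancel' H.1] at this
      · intro e' he'
        rw [whC_monomial_mul, ← hwzm]
        split_ifs with h4
        · rw [whC_comm, whC_wz_eq_zero_of_zdeg_lt
            (fun μ hμ => zdeg_le_of_support hμ) (by omega), map_zero, mul_zero]
        · rfl
      · rw [hRHS, if_pos H, whC_monomial_mul, ← hwzm, if_pos H.2.1, H.2.2,
          whC_comm, ← inW_eq]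
    · refine ⟨0, J.zero_mem, isHomogeneous_zero _ _ _, fun e' _ => map_zero _, ?_⟩
      rw [hRHS, if_neg H, map_zero]
  | zero =>
    exact ⟨0, J.zero_mem, isHomogeneous_zero _ _ _, fun e' _ => map_zero _, by
      rw [map_zero, map_zero, map_zero]⟩
  | add x y hx hy ihx ihy =>
    obtain ⟨v1, hv1J, hv1h, hv1z, hv1e⟩ := ihx
    obtain ⟨v2, hv2J, hv2h, hv2z, hv2e⟩ := ihy
    refine ⟨v1 + v2, J.add_mem hv1J hv2J, hv1h.add hv2h, ?_, ?_⟩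
    · intro e' he'
      rw [map_add, hv1z e' he', hv2z e' he', add_zero]
    · rw [map_add, hv1e, hv2e, map_add, map_add]
  | smul r x hx ih =>
    obtain ⟨v, hvJ, hvh, hvz, hve⟩ := ih
    refine ⟨r • v, real_smul_mem J r hvJ, ?_, ?_, ?_⟩
    · rw [← mem_homogeneousSubmodule] at hvh ⊢
      exact Submodule.smul_mem _ _ hvh
    · intro e' he'
      rw [map_smul, hvz e' he', smul_zero]
    · rw [map_smul, hve, map_smul, map_smul]

def Zlt (e : ℕ) : Submodule ℝ PS :=
  ⨅ (e' : ℕ) (_ : e ≤ e'), LinearMap.ker (weightedHomogeneousComponent wz e')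

lemma mem_Zlt {e : ℕ} {f : PS} :
    f ∈ Zlt e ↔ ∀ e', e ≤ e' → weightedHomogeneousComponent wz e' f = 0 := by
  simp [Zlt, Submodule.mem_iInf, LinearMap.mem_ker]

lemma Zlt_zero : Zlt 0 = ⊥ := by
  apply le_antisymm _ bot_le
  intro f hf
  rw [mem_Zlt] at hf
  rw [Submodule.mem_bot]
  ext μ
  have h2 := congrArg (coeff μ) (hf (μ 2) (Nat.zero_le _))
  rw [coeff_weightedHomogeneousComponent, if_pos (weight_wz μ), coeff_zero] at h2
  simpa using h2

lemma Sd_le_restrict (d : ℕ) :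
    homogeneousSubmodule (Fin 3) ℝ d ≤ restrictTotalDegree (Fin 3) ℝ d := by
  intro p hp
  rw [mem_restrictTotalDegree]
  exact ((mem_homogeneousSubmodule _ _).mp hp).totalDegree_le

instance hSdFD (d : ℕ) : FiniteDimensional ℝ ↥(homogeneousSubmodule (Fin 3) ℝ d) :=
  Submodule.finiteDimensional_of_le (Sd_le_restrict d)

set_option synthInstance.maxHeartbeats 1000000 in
set_option maxHeartbeats 1000000 in
lemma rank_step {d : ℕ} (A : Submodule ℝ PS) (hA : A ≤ homogeneousSubmodule (Fin 3) ℝ d)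
    (e : ℕ) :
    Module.finrank ℝ ↥(A ⊓ Zlt (e+1))
      = Module.finrank ℝ ↥(Submodule.map (weightedHomogeneousComponent wz e) (A ⊓ Zlt (e+1)))
        + Module.finrank ℝ ↥(A ⊓ Zlt e) := by
  haveI : FiniteDimensional ℝ ↥(A ⊓ Zlt (e+1)) :=
    Submodule.finiteDimensional_of_le (le_trans inf_le_left hA)
  have h := LinearMap.finrank_range_add_finrank_ker
    ((weightedHomogeneousComponent wz e : PS →ₗ[ℝ] PS).comp (A ⊓ Zlt (e+1)).subtype)
  rw [LinearMap.range_comp, Submodule.range_subtype] at h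
  have hker : LinearMap.ker ((weightedHomogeneousComponent wz e : PS →ₗ[ℝ] PS).comp
        (A ⊓ Zlt (e+1)).subtype)
      = Submodule.comap (A ⊓ Zlt (e+1)).subtype (A ⊓ Zlt e) := by
    ext x
    simp only [LinearMap.mem_ker, LinearMap.comp_apply, Submodule.mem_comap,
      Submodule.coe_subtype, Submodule.mem_inf, mem_Zlt]
    constructor
    · intro hx
      have hxB : (x : PS) ∈ A ⊓ Zlt (e+1) := x.2
      rw [Submodule.mem_inf, mem_Zlt] at hxB
      refine ⟨hxB.1, fun e' he' => ?_⟩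
      rcases Nat.eq_or_lt_of_le he' with hc | hc
      · rw [← hc]; exact hx
      · exact hxB.2 e' hc
    · intro hx
      exact hx.2 e le_rfl
  rw [hker] at h
  have hle : A ⊓ Zlt e ≤ A ⊓ Zlt (e+1) := by
    refine inf_le_inf le_rfl ?_
    intro f hf
    rw [mem_Zlt] at hf ⊢
    exact fun e' he' => hf e' (by omega)
  have heq : Module.finrank ℝ ↥(Submodule.comap (A ⊓ Zlt (e+1)).subtype (A ⊓ Zlt e))
      = Module.finrank ℝ ↥(A ⊓ Zlt e) :=
    (Submodule.comapSubtypeEquivOfLe hle).finrank_eq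
  rw [heq] at h
  omega

lemma rank_eq_of_map_eq {d : ℕ} (A B : Submodule ℝ PS)
    (hA : A ≤ homogeneousSubmodule (Fin 3) ℝ d) (hB : B ≤ homogeneousSubmodule (Fin 3) ℝ d)
    (hmap : ∀ e, Submodule.map (weightedHomogeneousComponent wz e) (A ⊓ Zlt (e+1))
      = Submodule.map (weightedHomogeneousComponent wz e) (B ⊓ Zlt (e+1))) :
    ∀ e, Module.finrank ℝ ↥(A ⊓ Zlt e) = Module.finrank ℝ ↥(B ⊓ Zlt e) := by
  intro e
  induction e with
  | zero => rw [Zlt_zero, inf_bot_eq, inf_bot_eq]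
  | succ e ih => rw [rank_step A hA e, rank_step B hB e, hmap e, ih]

lemma inf_Zlt_top {d : ℕ} (A : Submodule ℝ PS) (hA : A ≤ homogeneousSubmodule (Fin 3) ℝ d) :
    A ⊓ Zlt (d+1) = A := by
  rw [inf_eq_left]
  intro f hf
  rw [mem_Zlt]
  intro e' he'
  apply whC_wz_eq_zero_of_zdeg_lt (b := d) _ (by omega)
  intro μ hμ
  have hfh : f.IsHomogeneous d := (mem_homogeneousSubmodule _ _).mp (hA hf)
  have := hfh (MvPolynomial.mem_support_iff.mp hμ)
  rw [weight_one'] at this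
  rw [deg3] at this
  omega

lemma map_layers_eq {J : Ideal PS} (hJhom : ∀ p ∈ J, ∀ d', homogeneousComponent d' p ∈ J)
    (d e : ℕ) :
    Submodule.map (weightedHomogeneousComponent wz e)
        ((Submodule.restrictScalars ℝ J ⊓ homogeneousSubmodule (Fin 3) ℝ d) ⊓ Zlt (e+1))
      = Submodule.map (weightedHomogeneousComponent wz e)
        ((Submodule.restrictScalars ℝ (inIdeal J) ⊓ homogeneousSubmodule (Fin 3) ℝ d)
          ⊓ Zlt (e+1)) := by
  apply le_antisymm
  · rintro x hx
    rw [Submodule.mem_map] at hx ⊢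
    obtain ⟨v, hv, rfl⟩ := hx
    rw [Submodule.mem_inf, Submodule.mem_inf, mem_Zlt] at hv
    obtain ⟨⟨hvJ, hvSd⟩, hvZ⟩ := hv
    by_cases h0 : weightedHomogeneousComponent wz e v = 0
    · exact ⟨0, Submodule.zero_mem _, by rw [map_zero, h0]⟩
    · have hvne : v ≠ 0 := fun h => h0 (by rw [h, map_zero])
      have hsupp : ∀ μ ∈ v.support, μ 2 ≤ e := by
        intro μ hμ
        by_contra hgt
        push_neg at hgt
        have hz := hvZ (μ 2) (by omega)
        have hcc := congrArg (coeff μ) hz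
        rw [coeff_weightedHomogeneousComponent, if_pos (weight_wz μ), coeff_zero] at hcc
        exact (MvPolynomial.mem_support_iff.mp hμ) hcc
      have hzdeg : zdeg v = e := by
        apply le_antisymm (Finset.sup_le hsupp)
        by_contra hlt
        push_neg at hlt
        exact h0 (whC_wz_eq_zero_of_zdeg_lt (fun μ hμ => zdeg_le_of_support hμ) hlt)
      have hLv : weightedHomogeneousComponent wz e v = inW v := by
        rw [inW_eq, hzdeg]
      have hWH : IsWeightedHomogeneous wz (weightedHomogeneousComponent wz e v) e :=
        weightedHomogeneousComponent_isWeightedHomogeneous e v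
      refine ⟨weightedHomogeneousComponent wz e v, ?_,
        IsWeightedHomogeneous.weightedHomogeneousComponent_same hWH⟩
    
      rw [Submodule.mem_inf, Submodule.mem_inf, mem_Zlt]
      refine ⟨⟨?_, ?_⟩, ?_⟩
      · rw [Submodule.restrictScalars_mem, hLv]
        exact Ideal.subset_span ⟨v, hvJ, hvne, rfl⟩
      · rw [mem_homogeneousSubmodule]
        exact isWH_of_whC 1 wz e ((mem_homogeneousSubmodule _ _).mp hvSd)
      · intro e' he'
        exact IsWeightedHomogeneous.weightedHomogeneousComponent_ne _ hWH (by omega)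
  · rintro x hx
    rw [Submodule.mem_map] at hx ⊢
    obtain ⟨u, hu, rfl⟩ := hx
    rw [Submodule.mem_inf, Submodule.mem_inf, mem_Zlt] at hu
    obtain ⟨⟨huK, huSd⟩, huZ⟩ := hu
    obtain ⟨v, hvJ, hvh, hvz, hve⟩ := key_lift hJhom huK d e
    refine ⟨v, ?_, ?_⟩
    · rw [Submodule.mem_inf, Submodule.mem_inf, mem_Zlt]
      exact ⟨⟨hvJ, (mem_homogeneousSubmodule _ _).mpr hvh⟩, fun e' he' => hvz e' (by omega)⟩
    · rw [hve, homogeneousComponent_of_mem huSd, if_pos rfl]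

lemma hdim_helper (K : Ideal PS) (d : ℕ) :
    Module.finrank ℝ ↥(Submodule.map (Ideal.Quotient.mkₐ ℝ K).toLinearMap
        (homogeneousSubmodule (Fin 3) ℝ d))
      + Module.finrank ℝ ↥(Submodule.restrictScalars ℝ K ⊓ homogeneousSubmodule (Fin 3) ℝ d)
      = Module.finrank ℝ ↥(homogeneousSubmodule (Fin 3) ℝ d) := by
  have h := LinearMap.finrank_range_add_finrank_ker
    ((Ideal.Quotient.mkₐ ℝ K).toLinearMap.comp (homogeneousSubmodule (Fin 3) ℝ d).subtype)
  rw [LinearMap.range_comp, Submodule.range_subtype] at h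
  have hker : LinearMap.ker ((Ideal.Quotient.mkₐ ℝ K).toLinearMap.comp
        (homogeneousSubmodule (Fin 3) ℝ d).subtype)
      = Submodule.comap (homogeneousSubmodule (Fin 3) ℝ d).subtype
          (Submodule.restrictScalars ℝ K ⊓ homogeneousSubmodule (Fin 3) ℝ d) := by
    ext x
    simp only [LinearMap.mem_ker, LinearMap.comp_apply, Submodule.mem_comap,
      Submodule.coe_subtype, Submodule.mem_inf, Submodule.restrictScalars_mem]
    rw [AlgHom.toLinearMap_apply, Ideal.Quotient.mkₐ_eq_mk, Ideal.Quotient.eq_zero_iff_mem]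
    exact ⟨fun hx => ⟨hx, x.2⟩, fun hx => hx.1⟩
  rw [hker] at h
  have heq : Module.finrank ℝ ↥(Submodule.comap (homogeneousSubmodule (Fin 3) ℝ d).subtype
        (Submodule.restrictScalars ℝ K ⊓ homogeneousSubmodule (Fin 3) ℝ d))
      = Module.finrank ℝ ↥(Submodule.restrictScalars ℝ K ⊓ homogeneousSubmodule (Fin 3) ℝ d) :=
    (Submodule.comapSubtypeEquivOfLe inf_le_right).finrank_eq
  rw [heq] at h
  exact h


end Aux

theorem initial_containment_same_hilbert_polynomial
    (N : ℕ) (n : Fin N → ℕ) (G : Fin N → PS)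
    (hhom : ∀ i, (G i).IsHomogeneous (n i))
    (hvan : ∀ i, G i ∈ (Ideal.span {X 0, X 1} : Ideal PS))
    (J : Ideal PS) (hJ : J = Ideal.span (Set.range G))
    (honly : ∃ k : ℕ, (Ideal.span {X 0, X 1} : Ideal PS) ^ k ≤ J)
    (c : Fin N → ℕ)
    (hc : ∀ i, (∀ m ∈ (G i).support, m 2 ≤ c i) ∧ zCoeff (G i) (c i) ≠ 0)
    (F : Fin N → PS) (hF : ∀ i, F i = zCoeff (G i) (c i))
    (I : Ideal PS) (hI : I = Ideal.span (Set.range F))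
    (hin : inIdeal J ≤ I) :
    ∃ D : ℕ, ∀ d : ℕ, D ≤ d → hdim J d = hdim I d := by
  classical
  obtain ⟨k, hk⟩ := honly
  -- basic facts
  have hzd : ∀ i, zdeg (G i) = c i ∧ G i ≠ 0 := fun i => zdeg_eq_of_zCoeff_ne (hc i).1 (hc i).2
  have hGJ : ∀ i, G i ∈ J := fun i => hJ ▸ Ideal.subset_span ⟨i, rfl⟩
  have hFhom : ∀ i, (F i).IsHomogeneous (n i - c i) := by
    intro i; rw [hF i]; exact zCoeff_isHomogeneous (hhom i)
  have hFz : ∀ i, ∀ τ ∈ (F i).support, τ 2 = 0 := by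
    intro i τ hτ; rw [hF i] at hτ; exact zCoeff_z_zero hτ
  have hinWG : ∀ i, monomial (Finsupp.single 2 (c i)) (1:ℝ) * F i = inW (G i) := by
    intro i; rw [hF i]; exact monomial_z_mul_zCoeff (hzd i).1
  have hcn : ∀ i, c i ≤ n i := by
    intro i
    rw [← (hzd i).1, zdeg]
    apply Finset.sup_le
    intro m hm
    have := hhom i (MvPolynomial.mem_support_iff.mp hm)
    rw [weight_one', deg3] at this
    omega
  have hJhom : ∀ p ∈ J, ∀ d', homogeneousComponent d' p ∈ J := by
    rw [hJ]
    refine homogeneousComponent_mem_span ?_ |> fun h p hp d' => h d' p hp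
    rintro f ⟨i, rfl⟩
    exact ⟨n i, hhom i⟩
  set Cc := Finset.univ.sup c with hCc
  refine ⟨k + Cc, fun d hd => ?_⟩
  -- Step 2 : I_d ⊆ inIdeal J
  have hgen2 : ∀ (m : Fin 3 →₀ ℕ) (i : Fin N),
      homogeneousComponent d (monomial m 1 * F i) ∈ inIdeal J := by
    intro m i
    have hhc : homogeneousComponent (σ := Fin 3) (R := ℝ) d
        = weightedHomogeneousComponent 1 d := rfl
    rw [hhc, whC_monomial_mul]
    split_ifs with h1
    · rw [weightedHomogeneousComponent_of_mem
        ((mem_weightedHomogeneousSubmodule _ _ _ _).mpr (hFhom i))]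
      split_ifs with h2
      · -- monomial m 1 * F i ∈ inIdeal J
        by_cases hm2 : c i ≤ m 2
        · have key : monomial m (1:ℝ) * F i
              = monomial (m - Finsupp.single 2 (c i)) 1 * inW (G i) := by
            rw [← hinWG i, ← mul_assoc, monomial_mul, one_mul,
              tsub_add_cancel_of_le (Finsupp.single_le_iff.mpr hm2)]
          rw [key]
          exact Ideal.mul_mem_left _ _
            (Ideal.subset_span ⟨G i, hGJ i, (hzd i).2, rfl⟩)
        · apply big_xy_mem hk
          intro μ hμ
          have hsub := support_mul (monomial m (1:ℝ)) (F i) hμ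
          rw [Finset.mem_add] at hsub
          obtain ⟨a, ha, τ, hτ, hsum⟩ := hsub
          rw [support_monomial, if_neg (one_ne_zero (α := ℝ)), Finset.mem_singleton] at ha
          rw [ha] at hsum
          rw [← hsum, Finsupp.add_apply, Finsupp.add_apply]
          have hτh := hFhom i (MvPolynomial.mem_support_iff.mp hτ)
          rw [weight_one', deg3] at hτh
          have hτ2 := hFz i τ hτ
          have hw1 : (Finsupp.weight (1 : Fin 3 → ℕ)) m = m 0 + m 1 + m 2 := by
            rw [weight_one', deg3]
          have hciC : c i ≤ Cc := Finset.le_sup (Finset.mem_univ i)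
          have hcni := hcn i
          omega
      · rw [mul_zero]; exact zero_mem _
    · exact zero_mem _
  have hcompall : ∀ x, x ∈ Submodule.span ℝ (Mset (Set.range F)) →
      homogeneousComponent d x ∈ inIdeal J := by
    intro x hx
    induction hx using Submodule.span_induction with
    | mem q hq =>
      obtain ⟨m, f, ⟨i, rfl⟩, rfl⟩ := hq
      exact hgen2 m i
    | zero => rw [map_zero]; exact zero_mem _
    | add x y hx hy ihx ihy => rw [map_add]; exact add_mem ihx ihy
    | smul r x hx ih => rw [map_smul]; exact real_smul_mem _ r ih
  have hstep2 : ∀ p, p ∈ I → p.IsHomogeneous d → p ∈ inIdeal J := by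
    intro p hpI hph
    rw [hI] at hpI
    have hcomp := hcompall p (mem_span_Mset hpI)
    rwa [homogeneousComponent_of_mem ((mem_homogeneousSubmodule _ _).mpr hph),
      if_pos rfl] at hcomp
  -- equality of graded pieces of inIdeal J and I
  have hKI : Submodule.restrictScalars ℝ (inIdeal J) ⊓ homogeneousSubmodule (Fin 3) ℝ d
      = Submodule.restrictScalars ℝ I ⊓ homogeneousSubmodule (Fin 3) ℝ d := by
    apply le_antisymm
    · exact inf_le_inf (fun x hx => hin hx) le_rfl
    · intro x hx
      rw [Submodule.mem_inf] at hx ⊢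
      exact ⟨hstep2 x hx.1 ((mem_homogeneousSubmodule _ _).mp hx.2), hx.2⟩
  -- rank equality
  have hA : Submodule.restrictScalars ℝ J ⊓ homogeneousSubmodule (Fin 3) ℝ d
      ≤ homogeneousSubmodule (Fin 3) ℝ d := inf_le_right
  have hB : Submodule.restrictScalars ℝ (inIdeal J) ⊓ homogeneousSubmodule (Fin 3) ℝ d
      ≤ homogeneousSubmodule (Fin 3) ℝ d := inf_le_right
  have hrank := rank_eq_of_map_eq _ _ hA hB (fun e => map_layers_eq hJhom d e) (d+1)
  rw [inf_Zlt_top _ hA, inf_Zlt_top _ hB, hKI] at hrank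
  have e1 := hdim_helper J d
  have e2 := hdim_helper I d
  simp only [hdim]
  omega

end
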